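/- Explicit spanning set for the kernel of t_a^n (the paper's Corollary 'kernelunibasis': the kernel of t_α^n equals Σ_{k=0}^n ℂ[[Λ^{1/2}]]_{α^{1/2}=1} · y_α^{(k)} + ℂ[[Λ^{1/2}]]_{α^{1/2}=1} · d_{α,+} · y_α^{(k)}'): let a ∈ G with a ≠ 0, let n ≥ 1, and let S ⊆ G be a transversal for the subgroup ℤ • a (every coset x + ℤ • a meets S in exactly one point). Define c'_k : ℤ → ℤ by c'_k m := c_k (m − 1) + c_k (m + 1). Then for f : G → ℂ one has t_a^n f = 0 if and only if there exist functions g_1, …, g_n, h_1, …, h_n : G → ℂ, each vanishing outside S (hence a-finite), such that f = Σ_{k=1}^{n} (g_k ⋆_a c_k + h_k ⋆_a c'_k). -/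

import Mathlib

/-- The lattice `ℤ^d`, modeling the lattice `Λ^{1/2}` of half-weights. -/
abbrev Glat (d : ℕ) : Type := Fin d → ℤ

/-- Multiplication by `d_{α,-} = α^{-1/2} - α^{1/2}` on unbounded Laurent series,
modeled as the operator `(t_a f) x = f (x + a) - f (x - a)`. -/
def ta {d : ℕ} (a : Glat d) (f : Glat d → ℂ) : Glat d → ℂ :=
  fun x => f (x + a) - f (x - a)

/-- The coefficient sequence `c_n` of the series `y_α^{(n)}` in powers of `α^{1/2}`:
for `n ≥ 1`, `c_n (2k+n) = choose (n-1+k) (n-1)` and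
`c_n (-(2k+n)) = (-1)^{n+1} * choose (n-1+k) (n-1)` for `k ∈ ℕ`, `0` elsewhere; `c_0 = 0`. -/
def cseq (n : ℕ) (m : ℤ) : ℤ :=
  if n = 0 then 0
  else if (n : ℤ) ≤ m ∧ (m - (n : ℤ)) % 2 = 0 then
    ((n - 1 + ((m - (n : ℤ)) / 2).toNat).choose (n - 1) : ℤ)
  else if m ≤ -(n : ℤ) ∧ (m + (n : ℤ)) % 2 = 0 then
    (-1) ^ (n + 1) * ((n - 1 + ((-m - (n : ℤ)) / 2).toNat).choose (n - 1) : ℤ)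
  else 0

/-- The coefficient sequence `c'_k` of `d_{α,+} · y_α^{(k)}`: `c'_k m = c_k (m-1) + c_k (m+1)`. -/
def cseq' (k : ℕ) (m : ℤ) : ℤ := cseq k (m - 1) + cseq k (m + 1)

/-- Convolution `(g ⋆_a c) x = Σ_{m ∈ ℤ} g (x - m•a) * c m`; for `g` vanishing outside a
transversal of `ℤ•a` (hence `a`-finite) only finitely many terms are nonzero. -/
noncomputable def conv {d : ℕ} (a : Glat d) (g : Glat d → ℂ) (c : ℤ → ℤ) : Glat d → ℂ :=
  fun x => ∑' m : ℤ, g (x - m • a) * (c m : ℂ)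

lemma cseq_zero (m : ℤ) : cseq 0 m = 0 := by simp [cseq]

lemma cseq_of_not (k : ℕ) (m : ℤ) (h1 : ¬((k:ℤ) ≤ m ∧ (m - (k:ℤ)) % 2 = 0))
    (h2 : ¬(m ≤ -(k:ℤ) ∧ (m + (k:ℤ)) % 2 = 0)) : cseq k m = 0 := by
  unfold cseq
  split_ifs <;> first | rfl | (exfalso; tauto)

lemma cseq_pos (k t : ℕ) : cseq (k+1) ((k:ℤ)+1+2*t) = ((k+t).choose k : ℤ) := by
  unfold cseq
  rw [if_neg (by omega), if_pos ⟨by push_cast; omega, by push_cast; omega⟩]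
  norm_num

lemma cseq_neg (k t : ℕ) : cseq (k+1) (-((k:ℤ)+1+2*t)) = (-1)^k * ((k+t).choose k : ℤ) := by
  unfold cseq
  rw [if_neg (by omega), if_neg (by push_cast; omega), if_pos ⟨by push_cast; omega, by push_cast; omega⟩]
  have h1 : ((-(-((k:ℤ)+1+2*t)) - (k+1:ℕ)) / 2).toNat = t := by push_cast; omega
  rw [h1]
  have : ((-1:ℤ))^(k+1+1) = (-1)^k := by ring
  simp [this]

lemma cseq_one (m : ℤ) : cseq 1 m = if m % 2 = 0 then 0 else 1 := by
  unfold cseq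
  split_ifs <;> simp_all <;> omega

lemma cseq_pos' (k t : ℕ) (m : ℤ) (hk : k ≠ 0) (hm : m = (k:ℤ) + 2*t) :
    cseq k m = ((k-1+t).choose (k-1) : ℤ) := by
  match k with
  | (j+1) =>
    subst hm
    have h := cseq_pos j t
    have e : ((j+1:ℕ):ℤ) + 2*(t:ℤ) = (j:ℤ)+1+2*(t:ℤ) := by push_cast; ring
    rw [e, h]
    norm_num

lemma cseq_neg' (k t : ℕ) (m : ℤ) (hk : k ≠ 0) (hm : m = -((k:ℤ) + 2*t)) :
    cseq k m = (-1)^(k+1) * ((k-1+t).choose (k-1) : ℤ) := by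
  match k with
  | (j+1) =>
    subst hm
    have h := cseq_neg j t
    have e : -(((j+1:ℕ):ℤ) + 2*(t:ℤ)) = -((j:ℤ)+1+2*(t:ℤ)) := by push_cast; ring
    rw [e, h]
    simp only [Nat.add_sub_cancel, pow_succ, pow_zero]
    ring

lemma choose_pascal (j t' : ℕ) :
    (j+1+(t'+1)).choose (j+1) = (j+1+t').choose j + (j+1+t').choose (j+1) := by
  have h := Nat.choose_succ_succ (j+1+t') j
  convert h using 2
  omega

lemma cseq_pascal (k : ℕ) (m : ℤ) : cseq k (m+1) - cseq k (m-1) = cseq (k-1) m := by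
  match k with
  | 0 => simp [cseq_zero]
  | 1 =>
      show _ = cseq 0 m
      simp only [cseq_one, cseq_zero]
      split_ifs <;> omega
  | (j+2) =>
      show cseq (j+2) (m+1) - cseq (j+2) (m-1) = cseq (j+1) m
      have hd1 : (j:ℕ)+2-1 = j+1 := rfl
      have hd2 : (j:ℕ)+1-1 = j := rfl
      by_cases h1 : ((j:ℤ)+1) ≤ m ∧ (m - ((j:ℤ)+1)) % 2 = 0
      · obtain ⟨t, rfl⟩ : ∃ t : ℕ, m = (j:ℤ)+1+2*t :=
          ⟨((m - ((j:ℤ)+1)) / 2).toNat, by omega⟩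
        clear h1
        rw [cseq_pos' (j+2) t ((j:ℤ)+1+2*(t:ℤ)+1) (by omega) (by push_cast; ring),
            cseq_pos' (j+1) t ((j:ℤ)+1+2*(t:ℤ)) (by omega) (by push_cast; ring), hd1, hd2]
        match t with
        | 0 =>
            rw [cseq_of_not (j+2) ((j:ℤ)+1+2*((0:ℕ):ℤ)-1) (by push_cast; omega) (by push_cast; omega)]
            simp
        | (t'+1) =>
            rw [cseq_pos' (j+2) t' ((j:ℤ)+1+2*((t'+1:ℕ):ℤ)-1) (by omega) (by push_cast; ring), hd1,
                choose_pascal j t']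
            push_cast; ring
      · by_cases h2 : m ≤ -((j:ℤ)+1) ∧ (m + ((j:ℤ)+1)) % 2 = 0
        · obtain ⟨t, rfl⟩ : ∃ t : ℕ, m = -((j:ℤ)+1+2*t) :=
            ⟨((-m - ((j:ℤ)+1)) / 2).toNat, by omega⟩
          clear h1 h2
          rw [cseq_neg' (j+2) t (-((j:ℤ)+1+2*(t:ℤ))-1) (by omega) (by push_cast; ring),
              cseq_neg' (j+1) t (-((j:ℤ)+1+2*(t:ℤ))) (by omega) (by push_cast; ring), hd1, hd2]
          match t with
          | 0 =>
              rw [cseq_of_not (j+2) (-((j:ℤ)+1+2*((0:ℕ):ℤ))+1) (by push_cast; omega) (by push_cast; omega)]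
              simp only [Nat.add_zero, Nat.choose_self, Nat.cast_one, mul_one, pow_succ]
              ring
          | (t'+1) =>
              rw [cseq_neg' (j+2) t' (-((j:ℤ)+1+2*((t'+1:ℕ):ℤ))+1) (by omega) (by push_cast; ring), hd1,
                  choose_pascal j t']
              push_cast [pow_succ]; ring
        · rw [cseq_of_not (j+2) (m+1) (by push_cast at h1 h2 ⊢; omega) (by push_cast at h1 h2 ⊢; omega),
              cseq_of_not (j+2) (m-1) (by push_cast at h1 h2 ⊢; omega) (by push_cast at h1 h2 ⊢; omega),
              cseq_of_not (j+1) m (by push_cast at h1 h2 ⊢; omega) (by push_cast at h1 h2 ⊢; omega)]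
          ring

/-- The shift-difference operator on sequences. -/
noncomputable def Tlin : Module.End ℂ (ℤ → ℂ) :=
  { toFun := fun u => fun m => u (m+1) - u (m-1)
    map_add' := by intro u v; funext m; simp; ring
    map_smul' := by intro c u; funext m; simp [Pi.smul_apply, smul_eq_mul]; ring }

lemma Tlin_apply (u : ℤ → ℂ) (m : ℤ) : Tlin u m = u (m+1) - u (m-1) := rfl

lemma cseq'_pascal (k : ℕ) (m : ℤ) : cseq' k (m+1) - cseq' k (m-1) = cseq' (k-1) m := by
  have h1 := cseq_pascal k (m-1)
  have h2 := cseq_pascal k (m+1)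
  unfold cseq'
  have e1 : m - 1 + 1 = m := by ring
  have e2 : m + 1 - 1 = m := by ring
  have e4 : m - 1 - 1 = m - 2 := by ring
  have e5 : m + 1 + 1 = m + 2 := by ring
  rw [e1, e4] at h1
  rw [e2, e5] at h2
  rw [e1, e2, e4, e5]
  linarith

lemma Tlin_cseq (k : ℕ) (s : ℤ) :
    Tlin (fun m => (cseq k (m + s) : ℂ)) = fun m => (cseq (k-1) (m + s) : ℂ) := by
  funext m
  rw [Tlin_apply]
  have := cseq_pascal k (m + s)
  have e1 : m + 1 + s = m + s + 1 := by ring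
  have e2 : m - 1 + s = m + s - 1 := by ring
  rw [e1, e2]
  push_cast [← this]
  ring

lemma Tlin_cseq' (k : ℕ) (s : ℤ) :
    Tlin (fun m => (cseq' k (m + s) : ℂ)) = fun m => (cseq' (k-1) (m + s) : ℂ) := by
  funext m
  rw [Tlin_apply]
  have := cseq'_pascal k (m + s)
  have e1 : m + 1 + s = m + s + 1 := by ring
  have e2 : m - 1 + s = m + s - 1 := by ring
  rw [e1, e2]
  push_cast [← this]
  ring

lemma cseq_pascal' (k : ℕ) (m : ℤ) :
    cseq (k+1) (m+1) - cseq (k+1) (m-1) = cseq k m := by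
  have := cseq_pascal (k+1) m; simpa using this

lemma cseq'_pascal' (k : ℕ) (m : ℤ) :
    cseq' (k+1) (m+1) - cseq' (k+1) (m-1) = cseq' k m := by
  have := cseq'_pascal (k+1) m; simpa using this

lemma cseq'_one (m : ℤ) : cseq' 1 m = if m % 2 = 0 then 2 else 0 := by
  unfold cseq'
  rw [cseq_one, cseq_one]
  split_ifs <;> omega

lemma two_periodic (p : ℤ → ℂ) (hp : ∀ m, p (m+2) = p m) (m : ℤ) : p m = p (m % 2) := by
  have key : ∀ q : ℤ, ∀ s : ℤ, p (2*q + s) = p s := by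
    intro q
    induction q using Int.induction_on with
    | zero => intro s; norm_num
    | succ q ih =>
        intro s
        have e : 2*((q:ℤ)+1) + s = 2*(q:ℤ) + s + 2 := by ring
        rw [e, hp]; exact ih s
    | pred q ih =>
        intro s
        have e : 2*(-(q:ℤ)-1) + s + 2 = 2*(-(q:ℤ)) + s := by ring
        have h2 := hp (2*(-(q:ℤ)-1) + s)
        rw [e] at h2
        rw [← h2]; exact ih s
  have e : m = 2*(m/2) + m % 2 := by omega
  calc p m = p (2*(m/2) + m % 2) := by rw [← e]
    _ = p (m % 2) := key _ _

lemma ker_one (u : ℤ → ℂ) (h : Tlin u = 0) :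
    u = fun m => u 1 * (cseq 1 m : ℂ) + (u 0 / 2) * (cseq' 1 m : ℂ) := by
  have hper : ∀ m, u (m+2) = u m := by
    intro m
    have := congrFun h (m+1)
    rw [Tlin_apply] at this
    have e1 : m + 1 + 1 = m + 2 := by ring
    have e2 : m + 1 - 1 = m := by ring
    rw [e1, e2] at this
    simpa [sub_eq_zero] using this
  funext m
  rw [cseq_one, cseq'_one, two_periodic u hper m]
  rcases (by omega : m % 2 = 0 ∨ m % 2 = 1) with h0 | h0 <;> rw [h0] <;> norm_num

lemma span_ker (n : ℕ) (u : ℤ → ℂ) (h : (Tlin ^ n) u = 0) :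
    ∃ b c : ℕ → ℂ, u = fun m => ∑ k ∈ Finset.range n,
      (b k * (cseq (k+1) m : ℂ) + c k * (cseq' (k+1) m : ℂ)) := by
  induction n generalizing u with
  | zero =>
      refine ⟨0, 0, ?_⟩
      simp only [pow_zero, Module.End.one_apply] at h
      rw [h]; funext m; simp
  | succ n ih =>
      rw [pow_succ, Module.End.mul_apply] at h
      obtain ⟨b, c, hbc⟩ := ih (Tlin u) h
      set w : ℤ → ℂ := fun m => ∑ k ∈ Finset.range n,
        (b k * (cseq (k+1+1) m : ℂ) + c k * (cseq' (k+1+1) m : ℂ)) with hw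
      have hTw : Tlin w = Tlin u := by
        funext m
        rw [Tlin_apply, hbc, hw]
        simp only []
        rw [← Finset.sum_sub_distrib]
        apply Finset.sum_congr rfl
        intro k _
        have p1 : ((cseq (k+1+1) (m+1) : ℤ) : ℂ) - ((cseq (k+1+1) (m-1) : ℤ) : ℂ)
            = ((cseq (k+1) m : ℤ) : ℂ) := by exact_mod_cast cseq_pascal' (k+1) m
        have p2 : ((cseq' (k+1+1) (m+1) : ℤ) : ℂ) - ((cseq' (k+1+1) (m-1) : ℤ) : ℂ)
            = ((cseq' (k+1) m : ℤ) : ℂ) := by exact_mod_cast cseq'_pascal' (k+1) m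
        linear_combination (b k) * p1 + (c k) * p2
      have hker : Tlin (u - w) = 0 := by rw [map_sub, hTw, sub_self]
      have hbase := ker_one (u - w) hker
      set B : ℕ → ℂ := fun k => match k with | 0 => (u - w) 1 | (k'+1) => b k' with hB
      set C : ℕ → ℂ := fun k => match k with | 0 => (u - w) 0 / 2 | (k'+1) => c k' with hC
      have hB0 : B 0 = (u - w) 1 := rfl
      have hBs : ∀ k, B (k+1) = b k := fun k => rfl
      have hC0 : C 0 = (u - w) 0 / 2 := rfl
      have hCs : ∀ k, C (k+1) = c k := fun k => rfl
      refine ⟨B, C, ?_⟩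
      funext m
      rw [Finset.sum_range_succ']
      simp only [hBs, hCs, hB0, hC0]
      have e : u m = (u - w) m + w m := by simp
      have e2 := congrFun hbase m
      rw [e, e2]
      simp only [hw]
      ring

lemma cseq'_zero (m : ℤ) : cseq' 0 m = 0 := by simp [cseq', cseq_zero]

lemma Tlin_pow_cseq (j k : ℕ) (s : ℤ) :
    (Tlin ^ j) (fun m => (cseq k (m + s) : ℂ)) = fun m => (cseq (k - j) (m + s) : ℂ) := by
  induction j with
  | zero => simp
  | succ j ih =>
      rw [pow_succ', Module.End.mul_apply, ih, Tlin_cseq]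
      have e : k - j - 1 = k - (j+1) := by omega
      rw [e]

lemma Tlin_pow_cseq' (j k : ℕ) (s : ℤ) :
    (Tlin ^ j) (fun m => (cseq' k (m + s) : ℂ)) = fun m => (cseq' (k - j) (m + s) : ℂ) := by
  induction j with
  | zero => simp
  | succ j ih =>
      rw [pow_succ', Module.End.mul_apply, ih, Tlin_cseq']
      have e : k - j - 1 = k - (j+1) := by omega
      rw [e]

lemma smul_inj {d : ℕ} (a : Glat d) (ha : a ≠ 0) {m m' : ℤ} (h : m • a = m' • a) : m = m' := by
  obtain ⟨i, hi⟩ := Function.ne_iff.mp ha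
  have h2 := congrFun h i
  simp only [Pi.smul_apply, smul_eq_mul] at h2
  have hi' : a i ≠ 0 := by simpa using hi
  exact mul_right_cancel₀ hi' h2

lemma ta_iter {d : ℕ} (a : Glat d) (n : ℕ) (f : Glat d → ℂ) (y : Glat d) :
    (fun m : ℤ => (ta a)^[n] f (y + m • a)) = (Tlin ^ n) (fun m : ℤ => f (y + m • a)) := by
  induction n generalizing f with
  | zero => simp
  | succ n ih =>
      have key : (fun m : ℤ => ta a f (y + m • a)) = Tlin (fun m : ℤ => f (y + m • a)) := by
        funext j
        rw [Tlin_apply]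
        have e1 : y + j • a + a = y + (j+1) • a := by rw [add_smul, one_smul]; abel
        have e2 : y + j • a - a = y + (j-1) • a := by rw [sub_smul, one_smul]; abel
        show f (y + j • a + a) - f (y + j • a - a) = _
        rw [e1, e2]
      funext m
      calc (ta a)^[n+1] f (y + m • a)
          = (ta a)^[n] (ta a f) (y + m • a) := by rw [Function.iterate_succ_apply]
        _ = (Tlin ^ n) (fun m : ℤ => ta a f (y + m • a)) m := congrFun (ih (ta a f)) m
        _ = (Tlin ^ n) (Tlin (fun m : ℤ => f (y + m • a))) m := by rw [key]
        _ = (Tlin ^ (n+1)) (fun m : ℤ => f (y + m • a)) m := by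
              rw [pow_succ, Module.End.mul_apply]

/-- Explicit spanning set for the kernel of `t_a^n`: it equals
`Σ_{k=1}^n ℂ[[Λ^{1/2}]]_{α^{1/2}=1} · y_α^{(k)} + ℂ[[Λ^{1/2}]]_{α^{1/2}=1} · d_{α,+} · y_α^{(k)}`,
where `S` is a transversal for the subgroup `ℤ • a`. -/
theorem kernel_of_ta_pow_explicit {d : ℕ} (hd : 1 ≤ d) (a : Glat d) (ha : a ≠ 0)
    (n : ℕ) (hn : 1 ≤ n) (S : Set (Glat d))
    (hS : ∀ x : Glat d, ∃! y, y ∈ S ∧ ∃ m : ℤ, y = x + m • a)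
    (f : Glat d → ℂ) :
    (ta a)^[n] f = 0 ↔
      ∃ g h : Fin n → (Glat d → ℂ),
        (∀ k, ∀ x ∉ S, g k x = 0) ∧ (∀ k, ∀ x ∉ S, h k x = 0) ∧
        f = ∑ k : Fin n,
          (conv a (g k) (cseq ((k : ℕ) + 1)) + conv a (h k) (cseq' ((k : ℕ) + 1))) := by
  classical
  choose Y hYS M hM using fun x => (hS x).exists
  have hsmul : ∀ {m m' : ℤ}, m • a = m' • a → m = m' := fun h => smul_inj a ha h
  have huniq : ∀ x y, y ∈ S → (∃ m : ℤ, y = x + m • a) → y = Y x := by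
    intro x y hy hm
    exact (hS x).unique ⟨hy, hm⟩ ⟨hYS x, M x, hM x⟩
  have hYshift : ∀ x (m : ℤ), Y (x + m • a) = Y x := by
    intro x m
    refine huniq x (Y (x + m • a)) (hYS _) ⟨m + M (x + m • a), ?_⟩
    rw [hM (x + m • a), add_smul]
    abel
  have hMshift : ∀ x (m : ℤ), M (x + m • a) = M x - m := by
    intro x m
    have h1 : x + m • a + M (x + m • a) • a = x + M x • a := by
      rw [← hM (x + m • a), hYshift, hM]
    have h2 : (m + M (x + m • a)) • a = (M x) • a := by
      rw [add_smul]
      rw [add_assoc] at h1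
      exact add_left_cancel h1
    have := hsmul h2
    omega
  have hx_eq : ∀ x, x = Y x + (-(M x)) • a := by
    intro x
    rw [hM x, neg_smul]
    abel
  have hconv : ∀ (g : Glat d → ℂ), (∀ z ∉ S, g z = 0) → ∀ (c : ℤ → ℤ) (x : Glat d),
      conv a g c x = g (Y x) * (c (-(M x)) : ℂ) := by
    intro g hg c x
    unfold conv
    have hYx : x - (-(M x)) • a = Y x := by rw [hM x, neg_smul]; abel
    rw [tsum_eq_single (-(M x)) ?_, hYx]
    intro m hm
    by_cases hzS : x - m • a ∈ S
    · exfalso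
      have h3 : x - m • a = Y x := huniq x _ hzS ⟨-m, by rw [neg_smul]; abel⟩
      rw [hM x] at h3
      have h4 : x + (-m) • a = x + M x • a := by rw [neg_smul]; rw [← h3]; abel
      have h5 : (-m) • a = M x • a := add_left_cancel h4
      exact hm (by have := hsmul h5; omega)
    · rw [hg _ hzS, zero_mul]
  have hzero : (ta a)^[n] f = 0 ↔ ∀ y, (Tlin ^ n) (fun m : ℤ => f (y + m • a)) = 0 := by
    constructor
    · intro h0 y
      rw [← ta_iter a n f y]
      funext m
      rw [h0]
      rfl
    · intro h0
      funext x
      have h1 := congrFun (ta_iter a n f x) 0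
      rw [h0 x] at h1
      simpa using h1
  rw [hzero]
  constructor
  · intro h0
    choose b c hbc using fun y => span_ker n (fun m : ℤ => f (y + m • a)) (h0 y)
    refine ⟨fun k x => if x ∈ S then b x k else 0, fun k x => if x ∈ S then c x k else 0,
      fun k x hx => by simp [hx], fun k x hx => by simp [hx], ?_⟩
    funext x
    rw [Finset.sum_apply]
    have hfx : f x = ∑ k ∈ Finset.range n,
        (b (Y x) k * (cseq (k+1) (-(M x)) : ℂ) + c (Y x) k * (cseq' (k+1) (-(M x)) : ℂ)) := by
      conv_lhs => rw [hx_eq x]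
      exact congrFun (hbc (Y x)) (-(M x))
    rw [hfx, ← Fin.sum_univ_eq_sum_range]
    apply Finset.sum_congr rfl
    intro k _
    rw [Pi.add_apply,
        hconv _ (fun z hz => by simp [hz]) _ x,
        hconv _ (fun z hz => by simp [hz]) _ x]
    simp only [if_pos (hYS x)]
  · rintro ⟨g, h2, hg, hh, hf⟩
    intro y
    have hu : (fun m : ℤ => f (y + m • a)) = ∑ k : Fin n,
        ((g k (Y y)) • (fun m : ℤ => (cseq ((k:ℕ)+1) (m + (-(M y))) : ℂ))
          + (h2 k (Y y)) • (fun m : ℤ => (cseq' ((k:ℕ)+1) (m + (-(M y))) : ℂ))) := by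
      funext m
      rw [hf, Finset.sum_apply, Finset.sum_apply]
      apply Finset.sum_congr rfl
      intro k _
      rw [Pi.add_apply, Pi.add_apply, Pi.smul_apply, Pi.smul_apply, smul_eq_mul, smul_eq_mul,
          hconv _ (hg k) _ _, hconv _ (hh k) _ _, hYshift, hMshift]
      have e : -(M y - m) = m + -(M y) := by ring
      rw [e]
    rw [hu, map_sum]
    apply Finset.sum_eq_zero
    intro k _
    rw [map_add, map_smul, map_smul, Tlin_pow_cseq n ((k:ℕ)+1) (-(M y)),
        Tlin_pow_cseq' n ((k:ℕ)+1) (-(M y))]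
    have e : (k:ℕ) + 1 - n = 0 := by omega
    rw [e]
    have z1 : (fun m : ℤ => ((cseq 0 (m + -(M y)) : ℤ) : ℂ)) = 0 := by
      funext m; simp [cseq_zero]
    have z2 : (fun m : ℤ => ((cseq' 0 (m + -(M y)) : ℤ) : ℂ)) = 0 := by
      funext m; simp [cseq'_zero]
    rw [z1, z2, smul_zero, smul_zero, add_zero]
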